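/- Let t = (1−(N−1)(D−1))/N. Every vector p = (p_1,…,p_{N^K}) with p_m = t for all m ∈ {1,…,N}, 0 ≤ p_m ≤ t for all m ∈ {N+1,…,N^K}, and Σ_{m=N+1}^{N^K} p_m = (N−1)(D−1), is a feasible distribution for the symmetric TSC scheme and satisfies max_{m ∈ {1,…,N^K}} p_m = t; hence every such p attains the minimum of max_m p_m over feasible distributions. -/

import Mathlib

open Finset Real

/-- Download cost of option `m` (0-indexed: options `1,…,N` of the paper are `m < N`)
in the symmetric TSC scheme with `N` databases and `K` messages. -/
noncomputable def tscCost (N m : ℕ) : ℝ := if m < N then (N : ℝ) - 1 else (N : ℝ)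

/-- `p` is a feasible query distribution for the symmetric TSC scheme with expected
normalized download cost `D`. -/
def TSCFeasible (N K : ℕ) (D : ℝ) (p : ℕ → ℝ) : Prop :=
  (∀ m ∈ Finset.range (N ^ K), 0 ≤ p m) ∧
  (∑ m ∈ Finset.range (N ^ K), p m = 1) ∧
  (1 / ((N : ℝ) - 1)) * (∑ m ∈ Finset.range (N ^ K), p m * tscCost N m) = D

/-- The optimal distribution `p*` for the symmetric TSC scheme. -/
noncomputable def tscOpt (N K : ℕ) (D : ℝ) (m : ℕ) : ℝ :=
  if m < N then (1 - ((N : ℝ) - 1) * (D - 1)) / N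
  else ((N : ℝ) - 1) * (D - 1) / ((N : ℝ) ^ K - (N : ℝ))

/-- Download cost of option `m` (0-indexed) in the alternative PIR scheme with
message length `L`. -/
noncomputable def altCost (N L m : ℕ) : ℝ := if m < N then (L : ℝ) else (L : ℝ) + 1

/-- `p` is a feasible query distribution for the alternative PIR scheme
(`M = N (L+1)^(K-1)` options) with expected normalized download cost `D`. -/
def AltFeasible (N K L : ℕ) (D : ℝ) (p : ℕ → ℝ) : Prop :=
  (∀ m ∈ Finset.range (N * (L + 1) ^ (K - 1)), 0 ≤ p m) ∧
  (∑ m ∈ Finset.range (N * (L + 1) ^ (K - 1)), p m = 1) ∧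
  (1 / (L : ℝ)) * (∑ m ∈ Finset.range (N * (L + 1) ^ (K - 1)), p m * altCost N L m) = D

/-- The optimal distribution `q*` for the alternative PIR scheme. -/
noncomputable def altOpt (N K L : ℕ) (D : ℝ) (m : ℕ) : ℝ :=
  if m < N then (1 - (L : ℝ) * (D - 1)) / N
  else (L : ℝ) * (D - 1) / ((N : ℝ) * ((L : ℝ) + 1) ^ (K - 1) - (N : ℝ))

/-- Rényi divergence of order `α` (`0 < α`, `α ≠ 1`) of a distribution `p` on `M`
options from the uniform distribution on those options (natural logarithm). -/
noncomputable def renyiDiv (M : ℕ) (α : ℝ) (p : ℕ → ℝ) : ℝ :=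
  (1 / (α - 1)) * Real.log ((M : ℝ) ^ (α - 1) * ∑ m ∈ Finset.range M, p m ^ α)

/-- Kullback–Leibler divergence of a distribution `p` on `M` options from the uniform
distribution on those options (natural logarithm, with `0 · log 0 = 0`). -/
noncomputable def klDivUnif (M : ℕ) (p : ℕ → ℝ) : ℝ :=
  ∑ m ∈ Finset.range M, p m * Real.log ((M : ℝ) * p m)

/-- The maximum of `p` over the `M` options. -/
noncomputable def maxOver (M : ℕ) (hM : M ≠ 0) (p : ℕ → ℝ) : ℝ :=
  (Finset.range M).sup' (Finset.nonempty_range_iff.mpr hM) p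

/-- with `t = (1-(N-1)(D-1))/N`, every vector `p` equal to `t` on the first
`N` options, between `0` and `t` on the remaining options, and with tail sum
`(N-1)(D-1)`, is feasible for the symmetric TSC scheme, has `max_m pₘ = t`, and attains
the minimum of `max_m pₘ` over feasible distributions. -/
theorem tsc_max_attained (N K : ℕ) (hN : 2 ≤ N) (hK : 2 ≤ K) (D : ℝ)
    (hD1 : 1 ≤ D) (hD2 : D ≤ ∑ k ∈ Finset.range K, ((N : ℝ) ^ k)⁻¹)
    (p : ℕ → ℝ)
    (hhead : ∀ m ∈ Finset.range N, p m = (1 - ((N : ℝ) - 1) * (D - 1)) / N)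
    (htail : ∀ m ∈ Finset.Ico N (N ^ K),
      0 ≤ p m ∧ p m ≤ (1 - ((N : ℝ) - 1) * (D - 1)) / N)
    (hsum : ∑ m ∈ Finset.Ico N (N ^ K), p m = ((N : ℝ) - 1) * (D - 1)) :
    TSCFeasible N K D p ∧
    maxOver (N ^ K) (pow_ne_zero K (show N ≠ 0 by omega)) p =
      (1 - ((N : ℝ) - 1) * (D - 1)) / N ∧
    ∀ q : ℕ → ℝ, TSCFeasible N K D q →
      maxOver (N ^ K) (pow_ne_zero K (show N ≠ 0 by omega)) p ≤
        maxOver (N ^ K) (pow_ne_zero K (show N ≠ 0 by omega)) q := by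

  have hN0 : (0:ℕ) < N := by omega
  have hNR : (2:ℝ) ≤ (N:ℝ) := by exact_mod_cast hN
  have hNpos : (0:ℝ) < (N:ℝ) := by linarith
  have hN1 : (0:ℝ) < (N:ℝ) - 1 := by linarith
  have hNne : (N:ℝ) ≠ 0 := ne_of_gt hNpos
  have hN1ne : (N:ℝ) - 1 ≠ 0 := ne_of_gt hN1
  have hNK : N ≤ N ^ K := Nat.le_self_pow (by omega) N
  set t : ℝ := (1 - ((N : ℝ) - 1) * (D - 1)) / N with ht
  -- geometric bound : sum ≤ N/(N-1)
  have hx1 : (N:ℝ)⁻¹ < 1 := by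
    rw [inv_lt_one_iff₀]; right; linarith
  have hxne : (N:ℝ)⁻¹ ≠ 1 := ne_of_lt hx1
  have hgeo : ∑ k ∈ Finset.range K, ((N : ℝ) ^ k)⁻¹ ≤ (N:ℝ) / ((N:ℝ) - 1) := by
    have h1 : ∑ k ∈ Finset.range K, ((N : ℝ) ^ k)⁻¹
        = (((N:ℝ)⁻¹) ^ K - 1) / ((N:ℝ)⁻¹ - 1) := by
      rw [← geom_sum_eq hxne K]
      exact Finset.sum_congr rfl (fun k _ => by rw [inv_pow])
    rw [h1]
    have hxK : (0:ℝ) ≤ ((N:ℝ)⁻¹) ^ K := by positivity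
    have h1x : (0:ℝ) < 1 - (N:ℝ)⁻¹ := by linarith
    have hNx : (N:ℝ) * (N:ℝ)⁻¹ = 1 := mul_inv_cancel₀ hNne
    rw [show ((N:ℝ)⁻¹ ^ K - 1) / ((N:ℝ)⁻¹ - 1) = (1 - (N:ℝ)⁻¹ ^ K) / (1 - (N:ℝ)⁻¹) from by
      rw [← neg_div_neg_eq]; ring_nf]
    rw [div_le_div_iff₀ h1x hN1]
    nlinarith
  have htle1 : ((N:ℝ) - 1) * (D - 1) ≤ 1 := by
    have h2 : D - 1 ≤ (N:ℝ)/((N:ℝ)-1) - 1 := by linarith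
    have h3 : (N:ℝ)/((N:ℝ)-1) - 1 = 1/((N:ℝ)-1) := by field_simp; ring
    rw [h3] at h2
    calc ((N:ℝ) - 1) * (D - 1) ≤ ((N:ℝ) - 1) * (1/((N:ℝ)-1)) :=
          mul_le_mul_of_nonneg_left h2 (le_of_lt hN1)
      _ = 1 := by field_simp
  have ht0 : 0 ≤ t := by
    apply div_nonneg _ (le_of_lt hNpos); linarith
  -- splitting sums
  have hsplit : ∀ f : ℕ → ℝ, ∑ m ∈ Finset.range (N ^ K), f m
      = (∑ m ∈ Finset.range N, f m) + ∑ m ∈ Finset.Ico N (N ^ K), f m := by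
    intro f
    have h := Finset.sum_Ico_consecutive f (Nat.zero_le N) hNK
    simp only [Finset.range_eq_Ico]
    exact h.symm
  have hheadsum : ∑ m ∈ Finset.range N, p m = (N:ℝ) * t := by
    rw [Finset.sum_congr rfl hhead, Finset.sum_const, Finset.card_range, nsmul_eq_mul]
  have hNt : (N:ℝ) * t = 1 - ((N : ℝ) - 1) * (D - 1) := by
    rw [ht]; field_simp
  have hsum1 : ∑ m ∈ Finset.range (N ^ K), p m = 1 := by
    rw [hsplit, hheadsum, hsum, hNt]; ring
  -- cost sums
  have hcost : ∀ r : ℕ → ℝ, ∑ m ∈ Finset.range (N ^ K), r m * tscCost N m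
      = ((N:ℝ) - 1) * (∑ m ∈ Finset.range N, r m)
        + (N:ℝ) * ∑ m ∈ Finset.Ico N (N ^ K), r m := by
    intro r
    rw [hsplit]
    congr 1
    · rw [Finset.mul_sum]
      refine Finset.sum_congr rfl (fun m hm => ?_)
      have : m < N := Finset.mem_range.mp hm
      simp [tscCost, this, mul_comm]
    · rw [Finset.mul_sum]
      refine Finset.sum_congr rfl (fun m hm => ?_)
      have : ¬ m < N := by have := (Finset.mem_Ico.mp hm).1; omega
      simp [tscCost, this, mul_comm]
  have hfeas : TSCFeasible N K D p := by
    refine ⟨?_, hsum1, ?_⟩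
    · intro m hm
      by_cases h : m < N
      · rw [hhead m (Finset.mem_range.mpr h)]; exact ht0
      · exact (htail m (Finset.mem_Ico.mpr ⟨by omega, Finset.mem_range.mp hm⟩)).1
    · rw [hcost, hheadsum, hsum, hNt]
      field_simp
      ring
  have hmax : maxOver (N ^ K) (pow_ne_zero K (show N ≠ 0 by omega)) p = t := by
    apply le_antisymm
    · apply Finset.sup'_le
      intro m hm
      by_cases h : m < N
      · rw [hhead m (Finset.mem_range.mpr h)]
      · exact (htail m (Finset.mem_Ico.mpr ⟨by omega, Finset.mem_range.mp hm⟩)).2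
    · have h0 : 0 ∈ Finset.range (N ^ K) := Finset.mem_range.mpr (by positivity)
      have := Finset.le_sup' p h0
      rw [hhead 0 (Finset.mem_range.mpr (by omega))] at this
      exact this
  refine ⟨hfeas, hmax, ?_⟩
  intro q hq
  obtain ⟨hq0, hq1, hq2⟩ := hq
  rw [hsplit] at hq1
  have hq2' : ((N:ℝ) - 1) * (∑ m ∈ Finset.range N, q m)
      + (N:ℝ) * ∑ m ∈ Finset.Ico N (N ^ K), q m = ((N:ℝ) - 1) * D := by
    have := hq2
    rw [hcost] at this
    field_simp at this
    linarith [this]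
  have hS1 : (N:ℝ) * t ≤ ∑ m ∈ Finset.range N, q m := by nlinarith
  have hsumt : ∑ m ∈ Finset.range N, t ≤ ∑ m ∈ Finset.range N, q m := by
    rw [Finset.sum_const, Finset.card_range, nsmul_eq_mul]; exact hS1
  obtain ⟨m, hm, hmt⟩ := Finset.exists_le_of_sum_le
    (Finset.nonempty_range_iff.mpr (by omega)) hsumt
  rw [hmax]
  calc t ≤ q m := hmt
    _ ≤ _ := Finset.le_sup' q (Finset.mem_range.mpr (lt_of_lt_of_le (Finset.mem_range.mp hm) hNK))
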